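/- arXiv:1507.02720 — 2 statements merged into one kernel-verified Lean document; each statement's English description precedes it below -/
import Mathlib

section
/- Let p ≥ 3 and let a₁, …, a_p be real numbers such that aᵢ + aⱼ ∈ {−1, 1} for all i < j. Then either all the aᵢ are equal to 1/2, or all are equal to −1/2, or there is exactly one index i with aᵢ ∈ {3/2, −3/2} and all other aⱼ equal −aᵢ/3 (that is, aⱼ = −1/2 if aᵢ = 3/2, and aⱼ = 1/2 if aᵢ = −3/2). -/
/-- If `p ≥ 3` and `aᵢ + aⱼ ∈ {−1, 1}` for all `i < j`, then either all `aᵢ = 1/2`,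
or all `aᵢ = −1/2`, or exactly one index has `aᵢ ∈ {3/2, −3/2}` and all others equal
`−aᵢ/3`. -/
theorem pairwise_sums_pm_one_characterization
    {p : ℕ} (hp : 3 ≤ p) (a : Fin p → ℝ)
    (h : ∀ i j : Fin p, i < j → a i + a j = 1 ∨ a i + a j = -1) :
    (∀ i, a i = 1 / 2) ∨ (∀ i, a i = -(1 / 2)) ∨
    (∃ i, (a i = 3 / 2 ∨ a i = -(3 / 2)) ∧ ∀ j, j ≠ i → a j = -(a i) / 3) := by
  have h' : ∀ i j : Fin p, i ≠ j → a i + a j = 1 ∨ a i + a j = -1 := by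
    intro i j hij
    rcases lt_or_gt_of_ne hij with hlt | hgt
    · exact h i j hlt
    · rcases h j i hgt with h1 | h1
      · left; linarith
      · right; linarith
  -- each a i lies in {3/2, 1/2, -1/2, -3/2}
  have hval : ∀ i : Fin p, a i = 3/2 ∨ a i = 1/2 ∨ a i = -(1/2) ∨ a i = -(3/2) := by
    intro i
    obtain ⟨j, k, hjk, hji, hki⟩ : ∃ j k : Fin p, j ≠ k ∧ j ≠ i ∧ k ≠ i := by
      by_cases h0 : (i : ℕ) = 0
      · exact ⟨⟨1, by omega⟩, ⟨2, by omega⟩, by simp [Fin.ext_iff],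
          by simp [Fin.ext_iff]; omega, by simp [Fin.ext_iff]; omega⟩
      by_cases h1 : (i : ℕ) = 1
      · exact ⟨⟨0, by omega⟩, ⟨2, by omega⟩, by simp [Fin.ext_iff],
          by simp [Fin.ext_iff]; omega, by simp [Fin.ext_iff]; omega⟩
      · exact ⟨⟨0, by omega⟩, ⟨1, by omega⟩, by simp [Fin.ext_iff],
          by simp [Fin.ext_iff]; omega, by simp [Fin.ext_iff]; omega⟩
    rcases h' i j (Ne.symm hji) with h1 | h1 <;>
      rcases h' i k (Ne.symm hki) with h2 | h2 <;>
      rcases h' j k hjk with h3 | h3 <;>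
      first
        | (left; linarith)
        | (right; left; linarith)
        | (right; right; left; linarith)
        | (right; right; right; linarith)
  by_cases hex : ∃ i : Fin p, a i = 3/2 ∨ a i = -(3/2)
  · obtain ⟨i, hi⟩ := hex
    right; right
    refine ⟨i, hi, fun j hj => ?_⟩
    rcases h' j i hj with hs | hs <;> rcases hi with hi | hi <;>
      rcases hval j with hv | hv | hv | hv <;> linarith
  · push_neg at hex
    have hall : ∀ i : Fin p, a i = 1/2 ∨ a i = -(1/2) := by
      intro i
      rcases hval i with hv | hv | hv | hv
      · exact absurd hv (hex i).1
      · exact Or.inl hv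
      · exact Or.inr hv
      · exact absurd hv (hex i).2
    have key : ∀ i j : Fin p, i ≠ j → a i = a j := by
      intro i j hij
      rcases h' i j hij with hs | hs <;>
        rcases hall i with h1 | h1 <;> rcases hall j with h2 | h2 <;> linarith
    rcases hall ⟨0, by omega⟩ with h0 | h0
    · left
      intro i
      by_cases hi : i = (⟨0, by omega⟩ : Fin p)
      · rw [hi]; exact h0
      · rw [key i ⟨0, by omega⟩ hi]; exact h0
    · right; left
      intro i
      by_cases hi : i = (⟨0, by omega⟩ : Fin p)
      · rw [hi]; exact h0
      · rw [key i ⟨0, by omega⟩ hi]; exact h0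
end

section
/- Let k ≥ 1, let ε₁, …, ε_k ∈ {−1, 1}, and suppose the diagonal matrix Y = diag(ε₁ i, …, ε_k i) belongs to the image of a Lie algebra homomorphism from su(2) into u(k) (equivalently, Y lies in a Lie subalgebra of u(k) isomorphic to su(2)). Then k is even and exactly k/2 of the εⱼ equal +1. Conversely, if k is even, the diagonal matrix with k/2 entries equal to i and k/2 entries equal to −i lies in a subalgebra of u(k) isomorphic to su(2). -/
open Matrix

attribute [local instance 100] LieRing.ofAssociativeRing

/-- The real Lie algebra `su(2)` of traceless skew-hermitian 2×2 complex matrices. -/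
def su2 : LieSubalgebra ℝ (Matrix (Fin 2) (Fin 2) ℂ) :=
{ carrier := {A | A.trace = 0 ∧ Aᴴ = -A},
  add_mem' := by
    rintro a b ⟨ha1, ha2⟩ ⟨hb1, hb2⟩
    exact ⟨by simp [Matrix.trace_add, ha1, hb1],
      by simp [Matrix.conjTranspose_add, ha2, hb2]; abel⟩,
  zero_mem' := by simp,
  smul_mem' := by
    rintro c a ⟨ha1, ha2⟩
    exact ⟨by simp [Matrix.trace_smul, ha1], by simp [Matrix.conjTranspose_smul, ha2]⟩,
  lie_mem' := by
    rintro a b ⟨ha1, ha2⟩ ⟨hb1, hb2⟩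
    constructor
    · simp [Ring.lie_def, Matrix.trace_sub, Matrix.trace_mul_comm a b]
    · simp [Ring.lie_def, Matrix.conjTranspose_sub, Matrix.conjTranspose_mul, ha2, hb2] }

namespace Su2Aux

open Kronecker

noncomputable section

def E1 : su2 := ⟨!![Complex.I, 0; 0, -Complex.I], by
  constructor
  · simp [Matrix.trace_fin_two]
  · ext i j; fin_cases i <;> fin_cases j <;> simp⟩

def E2 : su2 := ⟨!![0, 1; -1, 0], by
  constructor
  · simp [Matrix.trace_fin_two]
  · ext i j; fin_cases i <;> fin_cases j <;> simp⟩

def E3 : su2 := ⟨!![0, Complex.I; Complex.I, 0], by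
  constructor
  · simp [Matrix.trace_fin_two]
  · ext i j; fin_cases i <;> fin_cases j <;> simp⟩

lemma bracket23 : ⁅E2, E3⁆ = (2:ℝ) • E1 := by
  apply Subtype.ext
  show ⁅(E2 : Matrix (Fin 2) (Fin 2) ℂ), (E3 : Matrix (Fin 2) (Fin 2) ℂ)⁆ = _
  rw [Ring.lie_def]
  show (!![0, 1; -1, 0] * !![0, Complex.I; Complex.I, 0]
    - !![0, Complex.I; Complex.I, 0] * !![0, 1; -1, 0]) = (2:ℝ) • !![Complex.I, 0; 0, -Complex.I]
  ext i j; fin_cases i <;> fin_cases j <;>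
    simp [Matrix.mul_apply, Fin.sum_univ_two] <;> ring

lemma bracket31 : ⁅E3, E1⁆ = (2:ℝ) • E2 := by
  apply Subtype.ext
  show ⁅(E3 : Matrix (Fin 2) (Fin 2) ℂ), (E1 : Matrix (Fin 2) (Fin 2) ℂ)⁆ = _
  rw [Ring.lie_def]
  show (!![0, Complex.I; Complex.I, 0] * !![Complex.I, 0; 0, -Complex.I]
    - !![Complex.I, 0; 0, -Complex.I] * !![0, Complex.I; Complex.I, 0]) = (2:ℝ) • !![0, 1; -1, 0]
  ext i j; fin_cases i <;> fin_cases j <;>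
    simp [Matrix.mul_apply, Fin.sum_univ_two, Complex.I_mul_I] <;> ring

lemma bracket12 : ⁅E1, E2⁆ = (2:ℝ) • E3 := by
  apply Subtype.ext
  show ⁅(E1 : Matrix (Fin 2) (Fin 2) ℂ), (E2 : Matrix (Fin 2) (Fin 2) ℂ)⁆ = _
  rw [Ring.lie_def]
  show (!![Complex.I, 0; 0, -Complex.I] * !![0, 1; -1, 0]
    - !![0, 1; -1, 0] * !![Complex.I, 0; 0, -Complex.I]) = (2:ℝ) • !![0, Complex.I; Complex.I, 0]
  ext i j; fin_cases i <;> fin_cases j <;>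
    simp [Matrix.mul_apply, Fin.sum_univ_two] <;> ring

/-- Every element of `su2` is a real combination of `E1, E2, E3`. -/
lemma decomp (X : su2) :
    X = ((X : Matrix (Fin 2) (Fin 2) ℂ) 0 0).im • E1
      + ((X : Matrix (Fin 2) (Fin 2) ℂ) 0 1).re • E2
      + ((X : Matrix (Fin 2) (Fin 2) ℂ) 0 1).im • E3 := by
  obtain ⟨ht, hs⟩ := X.2
  set M := (X : Matrix (Fin 2) (Fin 2) ℂ) with hM
  apply Subtype.ext
  show M = (M 0 0).im • (E1 : Matrix (Fin 2) (Fin 2) ℂ)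
      + (M 0 1).re • (E2 : Matrix (Fin 2) (Fin 2) ℂ)
      + (M 0 1).im • (E3 : Matrix (Fin 2) (Fin 2) ℂ)
  have h00 : (starRingEnd ℂ) (M 0 0) = -(M 0 0) := by
    have := congrFun (congrFun hs 0) 0
    simpa [Matrix.conjTranspose_apply] using this
  have h00re : (M 0 0).re = 0 := by
    have := congrArg Complex.re h00
    simp at this
    linarith
  have h11 : M 1 1 = -(M 0 0) := by
    have : M 0 0 + M 1 1 = 0 := by simpa [Matrix.trace_fin_two] using ht
    linear_combination this
  have h10 : M 1 0 = -(starRingEnd ℂ) (M 0 1) := by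
    have h := congrFun (congrFun hs 1) 0
    simp [Matrix.conjTranspose_apply] at h
    rw [h]; simp
  have h00im : M 0 0 = Complex.I * (M 0 0).im := by
    apply Complex.ext <;> simp [h00re]
  ext i j
  fin_cases i <;> fin_cases j <;>
    simp [E1, E2, E3, Matrix.add_apply, Matrix.smul_apply, h11, h10] <;>
    apply Complex.ext <;> simp [h00re]

lemma trace_bracket {k : ℕ} (A B : Matrix (Fin k) (Fin k) ℂ) :
    Matrix.trace ⁅A, B⁆ = 0 := by
  rw [Ring.lie_def]
  simp [Matrix.trace_sub, Matrix.trace_mul_comm A B]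

lemma trace_image_eq_zero {k : ℕ}
    (f : su2 →ₗ⁅ℝ⁆ Matrix (Fin k) (Fin k) ℂ) (X : su2) :
    Matrix.trace (f X) = 0 := by
  have hE1 : Matrix.trace (f E1) = 0 := by
    have h : f E1 = (2:ℝ)⁻¹ • ⁅f E2, f E3⁆ := by
      rw [← f.map_lie, bracket23, map_smul f]
      rw [smul_smul]; norm_num
    rw [h, Matrix.trace_smul, trace_bracket]; simp
  have hE2 : Matrix.trace (f E2) = 0 := by
    have h : f E2 = (2:ℝ)⁻¹ • ⁅f E3, f E1⁆ := by
      rw [← f.map_lie, bracket31, map_smul f]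
      rw [smul_smul]; norm_num
    rw [h, Matrix.trace_smul, trace_bracket]; simp
  have hE3 : Matrix.trace (f E3) = 0 := by
    have h : f E3 = (2:ℝ)⁻¹ • ⁅f E1, f E2⁆ := by
      rw [← f.map_lie, bracket12, map_smul f]
      rw [smul_smul]; norm_num
    rw [h, Matrix.trace_smul, trace_bracket]; simp
  rw [decomp X, map_add f, map_add f, map_smul f, map_smul f, map_smul f]
  simp [Matrix.trace_add, Matrix.trace_smul, hE1, hE2, hE3]

lemma subKron {m : ℕ} (A B : Matrix (Fin 2) (Fin 2) ℂ) (C : Matrix (Fin m) (Fin m) ℂ) :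
    (A - B) ⊗ₖ C = A ⊗ₖ C - B ⊗ₖ C := by
  ext ⟨i,j⟩ ⟨p,q⟩
  simp [Matrix.kroneckerMap_apply, sub_mul]

lemma conjTransposeKron {m : ℕ} (A : Matrix (Fin 2) (Fin 2) ℂ) (B : Matrix (Fin m) (Fin m) ℂ) :
    (A ⊗ₖ B)ᴴ = Aᴴ ⊗ₖ Bᴴ := by
  ext ⟨i,j⟩ ⟨p,q⟩
  simp [Matrix.conjTranspose_apply, Matrix.kroneckerMap_apply, mul_comm]

/-- The block-diagonal embedding of `su2` into `k×k` matrices via an identification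
`Fin k ≃ Fin 2 × Fin m`. -/
def lift {k m : ℕ} (E : Fin k ≃ Fin 2 × Fin m) : su2 →ₗ⁅ℝ⁆ Matrix (Fin k) (Fin k) ℂ :=
{ toFun := fun X =>
    ((X : Matrix (Fin 2) (Fin 2) ℂ) ⊗ₖ (1 : Matrix (Fin m) (Fin m) ℂ)).submatrix E E,
  map_add' := fun X Y => by
    simp [Matrix.add_kronecker, Matrix.submatrix_add]
  map_smul' := fun c X => by
    have hc : ((c • X : su2) : Matrix (Fin 2) (Fin 2) ℂ)
        = c • (X : Matrix (Fin 2) (Fin 2) ℂ) := rfl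
    simp [hc, Matrix.smul_kronecker, Matrix.submatrix_smul]
  map_lie' := fun {X Y} => by
    have hker : ∀ A B : Matrix (Fin 2) (Fin 2) ℂ,
        (A * B) ⊗ₖ (1 : Matrix (Fin m) (Fin m) ℂ) = (A ⊗ₖ 1) * (B ⊗ₖ 1) := fun A B => by
      rw [← Matrix.mul_kronecker_mul, Matrix.one_mul]
    have hXY : ((⁅X, Y⁆ : su2) : Matrix (Fin 2) (Fin 2) ℂ)
        = (X : Matrix (Fin 2) (Fin 2) ℂ) * (Y : Matrix (Fin 2) (Fin 2) ℂ)
          - (Y : Matrix (Fin 2) (Fin 2) ℂ) * (X : Matrix (Fin 2) (Fin 2) ℂ) := by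
      rw [LieSubalgebra.coe_bracket, Ring.lie_def]
    rw [hXY, subKron, hker, hker, Ring.lie_def, Matrix.submatrix_mul_equiv,
      Matrix.submatrix_mul_equiv, Matrix.submatrix_sub]
    rfl }

lemma lift_skew {k m : ℕ} (E : Fin k ≃ Fin 2 × Fin m) (X : su2) :
    (lift E X)ᴴ = -(lift E X) := by
  have hs : ((X : Matrix (Fin 2) (Fin 2) ℂ))ᴴ = -(X : Matrix (Fin 2) (Fin 2) ℂ) := X.2.2
  show (((X : Matrix (Fin 2) (Fin 2) ℂ)
      ⊗ₖ (1 : Matrix (Fin m) (Fin m) ℂ)).submatrix E E)ᴴ = _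
  rw [Matrix.conjTranspose_submatrix, conjTransposeKron, hs, Matrix.conjTranspose_one]
  have : (-(X : Matrix (Fin 2) (Fin 2) ℂ)) ⊗ₖ (1 : Matrix (Fin m) (Fin m) ℂ)
      = -((X : Matrix (Fin 2) (Fin 2) ℂ) ⊗ₖ (1 : Matrix (Fin m) (Fin m) ℂ)) := by
    ext ⟨i,j⟩ ⟨p,q⟩
    simp [Matrix.kroneckerMap_apply]
  rw [this, Matrix.submatrix_neg]
  rfl

lemma lift_E1 {k m : ℕ} (hm : k = 2 * m) (E : Fin k ≃ Fin 2 × Fin m)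
    (hE1 : ∀ j : Fin k, ((E j).1 : ℕ) = (j : ℕ) / m)
    (hE2 : ∀ j : Fin k, ((E j).2 : ℕ) = (j : ℕ) % m) :
    lift E E1
      = Matrix.diagonal (fun j : Fin k => if (j : ℕ) < m then Complex.I else -Complex.I) := by
  have key : ∀ r r' : Fin 2, r ≠ r' →
      (!![Complex.I, 0; 0, -Complex.I] : Matrix (Fin 2) (Fin 2) ℂ) r r' = 0 := by
    intro r r' h
    fin_cases r <;> fin_cases r' <;> simp_all
  ext j l
  have hm0 : 0 < m := by have := j.isLt; omega
  show (!![Complex.I, 0; 0, -Complex.I] : Matrix (Fin 2) (Fin 2) ℂ) (E j).1 (E l).1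
      * (1 : Matrix (Fin m) (Fin m) ℂ) (E j).2 (E l).2 = _
  by_cases hjl : j = l
  · subst hjl
    rw [Matrix.diagonal_apply_eq, Matrix.one_apply_eq, mul_one]
    by_cases hlt : (j : ℕ) < m
    · have h1 : (E j).1 = 0 := by
        apply Fin.ext
        rw [hE1]
        simpa using Nat.div_eq_of_lt hlt
      rw [h1, if_pos hlt]
      simp
    · have h1 : (E j).1 = 1 := by
        apply Fin.ext
        rw [hE1]
        have hj2 := j.isLt
        have hd : (j : ℕ) / m = 1 := Nat.div_eq_of_lt_le (by omega) (by omega)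
        simpa using hd
      rw [h1, if_neg hlt]
      simp
  · rw [Matrix.diagonal_apply_ne _ hjl]
    by_cases h1 : (E j).1 = (E l).1
    · have h2 : (E j).2 ≠ (E l).2 := fun h2 => hjl (E.injective (Prod.ext h1 h2))
      rw [Matrix.one_apply_ne h2, mul_zero]
    · rw [key _ _ h1, zero_mul]

end

end Su2Aux


/-- A diagonal matrix `diag(ε₁ i, …, ε_k i)` with `εⱼ = ±1` lies in the image of a Lie
algebra homomorphism of `su(2)` into `u(k)` iff `k` is even and exactly `k/2` of the `εⱼ`
equal `+1` (and in the even case such a homomorphism exists hitting the balanced diagonal). -/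
theorem diagonal_in_su2_subalgebra_of_u_iff
    {k : ℕ} (hk : 1 ≤ k) (ε : Fin k → ℝ) (hε : ∀ j, ε j = 1 ∨ ε j = -1) :
    ((∃ f : su2 →ₗ⁅ℝ⁆ Matrix (Fin k) (Fin k) ℂ,
        (∀ X : su2, (f X)ᴴ = -(f X)) ∧
        Matrix.diagonal (fun j => (ε j : ℂ) * Complex.I) ∈ Set.range f) →
      (Even k ∧ (Finset.univ.filter fun j => ε j = 1).card = k / 2)) ∧
    (Even k →
      ∃ f : su2 →ₗ⁅ℝ⁆ Matrix (Fin k) (Fin k) ℂ,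
        (∀ X : su2, (f X)ᴴ = -(f X)) ∧
        Matrix.diagonal (fun j : Fin k => if (j : ℕ) < k / 2 then Complex.I else -Complex.I)
          ∈ Set.range f) := by
  constructor
  · rintro ⟨f, -, X, hX⟩
    have htr := Su2Aux.trace_image_eq_zero f X
    rw [hX, Matrix.trace_diagonal] at htr
    rw [← Finset.sum_mul] at htr
    have hsumC : (∑ j, (ε j : ℂ)) = 0 :=
      (mul_eq_zero.mp htr).resolve_right Complex.I_ne_zero
    have hsum : (∑ j, ε j) = 0 := by exact_mod_cast hsumC
    classical
    set S := Finset.univ.filter (fun j => ε j = 1) with hS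
    set T := Finset.univ.filter (fun j => ¬ ε j = 1) with hT
    have hcard : S.card + T.card = k := by
      rw [hS, hT, Finset.card_filter_add_card_filter_not]
      simp
    have hsum2 : (∑ j, ε j) = (S.card : ℝ) - T.card := by
      rw [← Finset.sum_filter_add_sum_filter_not Finset.univ (fun j => ε j = 1) ε, ← hS, ← hT]
      have h1 : ∑ j ∈ S, ε j = (S.card : ℝ) := by
        rw [Finset.sum_congr rfl (fun j hj => (Finset.mem_filter.mp hj).2)]
        simp
        rfl
      have h2 : ∑ j ∈ T, ε j = -(T.card : ℝ) := by
        have : ∀ j ∈ T, ε j = -1 := by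
          intro j hj
          exact (hε j).resolve_left (Finset.mem_filter.mp hj).2
        rw [Finset.sum_congr rfl this]
        simp
      rw [h1, h2]
      ring
    have hST : S.card = T.card := by
      have : (S.card : ℝ) = T.card := by linarith [hsum2 ▸ hsum]
      exact_mod_cast this
    constructor
    · exact ⟨S.card, by omega⟩
    · omega
  · rintro ⟨m, hm⟩
    have hm' : k = 2 * m := by omega
    set E : Fin k ≃ Fin 2 × Fin m := (finCongr hm').trans finProdFinEquiv.symm with hE
    refine ⟨Su2Aux.lift E, Su2Aux.lift_skew E, Su2Aux.E1, ?_⟩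
    have h2 : k / 2 = m := by omega
    simp only [h2]
    apply Su2Aux.lift_E1 hm' E
    · intro j
      simp [hE, finProdFinEquiv, Fin.divNat]
    · intro j
      simp [hE, finProdFinEquiv, Fin.modNat]
end
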